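/- The function f(Ψ, Φ) = log(1 + Ψ²/Φ) on the domain Ψ ≥ 0, Φ > 0 satisfies, for any reference point (Ψ⁰, Φ⁰) with Ψ⁰ ≥ 0, Φ⁰ > 0, the lower bound f(Ψ, Φ) ≥ log(1 + (Ψ⁰)²/Φ⁰) − (Ψ⁰)²/Φ⁰ + 2Ψ⁰Ψ/Φ⁰ − (Ψ⁰)²(Ψ² + Φ) / (Φ⁰((Ψ⁰)² + Φ⁰)). -/

import Mathlib

theorem SE_concave_lower_bound (Ψ Φ Ψ0 Φ0 : ℝ)
    (hΨ : 0 ≤ Ψ) (hΦ : 0 < Φ) (hΨ0 : 0 ≤ Ψ0) (hΦ0 : 0 < Φ0) :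
    Real.log (1 + Ψ ^ 2 / Φ) ≥
      Real.log (1 + Ψ0 ^ 2 / Φ0) - Ψ0 ^ 2 / Φ0 + 2 * Ψ0 * Ψ / Φ0 -
        Ψ0 ^ 2 * (Ψ ^ 2 + Φ) / (Φ0 * (Ψ0 ^ 2 + Φ0)) := by
  have hA : 0 < 1 + Ψ ^ 2 / Φ := by positivity
  have hB : 0 < 1 + Ψ0 ^ 2 / Φ0 := by positivity
  have hlog : Real.log ((1 + Ψ0 ^ 2 / Φ0) / (1 + Ψ ^ 2 / Φ)) ≤
      (1 + Ψ0 ^ 2 / Φ0) / (1 + Ψ ^ 2 / Φ) - 1 :=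
    Real.log_le_sub_one_of_pos (by positivity)
  rw [Real.log_div (ne_of_gt hB) (ne_of_gt hA)] at hlog
  have key : (1 + Ψ0 ^ 2 / Φ0) / (1 + Ψ ^ 2 / Φ) - 1 ≤
      Ψ0 ^ 2 / Φ0 - 2 * Ψ0 * Ψ / Φ0 +
        Ψ0 ^ 2 * (Ψ ^ 2 + Φ) / (Φ0 * (Ψ0 ^ 2 + Φ0)) := by
    have hS : 0 < Ψ ^ 2 + Φ := by positivity
    have hS0 : 0 < Ψ0 ^ 2 + Φ0 := by positivity
    rw [div_sub_one (ne_of_gt hA), div_le_iff₀ hA]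
    have hsq := sq_nonneg ((Ψ0 ^ 2 + Φ0) * Ψ - Ψ0 * (Ψ ^ 2 + Φ))
    field_simp
    nlinarith [mul_pos hΦ hΦ0, mul_pos hS hS0, sq_nonneg Ψ, sq_nonneg Ψ0,
      mul_nonneg (mul_nonneg hΦ.le hΦ0.le) hsq]
  linarith
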